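/- For every α ∈ {AB, ABB}* and β ∈ {BA, BBA}*, the concatenation αβ does not contain AA as a factor. -/

import Mathlib

inductive AB10 : Type
  | A : AB10
  | B : AB10

open AB10

def lblock10 (b : Bool) : List AB10 := if b then [A, B, B] else [A, B]

def rblock10 (b : Bool) : List AB10 := if b then [B, B, A] else [B, A]

def R10 (x y : AB10) : Prop := x = B ∨ y = B

lemma chain_no_aa {w : List AB10} (h : w.Chain' R10) : ¬ [A, A] <:+: w := by
  rintro ⟨s, t, rfl⟩
  rw [List.append_assoc] at h
  have h1 := (List.isChain_append.mp h).2.1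
  simp [List.isChain_cons_cons, R10] at h1

lemma right_ok (lb : List Bool) :
    ((lb.map rblock10).flatten).Chain' R10 ∧
      (((lb.map rblock10).flatten).head? = none ∨
        ((lb.map rblock10).flatten).head? = some B) := by
  induction lb with
  | nil => simp [List.Chain']
  | cons b lb ih =>
    obtain ⟨hc, hh⟩ := ih
    constructor
    · rw [List.map_cons, List.flatten_cons, List.Chain', List.isChain_append]
      refine ⟨?_, hc, ?_⟩
      · cases b <;> simp [rblock10, List.isChain_cons_cons, R10]
      · intro x hx y hy
        rcases hh with hh | hh
        · simp [hh] at hy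
        · rw [hh] at hy
          simp at hy
          right; exact hy.symm ▸ rfl
    · right
      rw [List.map_cons, List.flatten_cons]
      cases b <;> simp [rblock10]

lemma left_strong (la : List Bool) (m : List AB10) (hm : m.Chain' R10) :
    ((la.map lblock10).flatten ++ m).Chain' R10 := by
  induction la with
  | nil => simpa using hm
  | cons b la ih =>
    rw [List.map_cons, List.flatten_cons, List.append_assoc, List.Chain', List.isChain_append]
    refine ⟨?_, ih, ?_⟩
    · cases b <;> simp [lblock10, List.isChain_cons_cons, R10]
    · intro x hx y hy
      cases b <;> simp [lblock10] at hx <;> exact Or.inl hx.symm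

/-- For `α ∈ {AB,ABB}*` and `β ∈ {BA,BBA}*`, the word `αβ` contains no `AA`. -/
theorem stmt10 (la lb : List Bool) :
    ¬ [A, A] <:+: ((la.map lblock10).flatten ++ (lb.map rblock10).flatten) := by
  exact chain_no_aa (left_strong la _ (right_ok lb).1)
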